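/- Suppose in addition that γ := max_{i=1,2} sup_{x₁∈ℝ} |f_i''(x₁) f(x₁)| < ∞. Then there exist constants C(ε) > 0 depending only on ε, μ, β and C(ε,γ) > 0 depending only on ε, γ, μ, β such that for all x ∈ Ω: |g(x)| ≤ C(ε) Φ / f(x₁) and |∇g(x)| ≤ C(ε,γ) Φ / f(x₁)². -/

import Mathlib

open MeasureTheory Set

/-- The channel `Ω = {(x₁,x₂) : f₁(x₁) < x₂ < f₂(x₁)}`. -/
def channel (f₁ f₂ : ℝ → ℝ) : Set (ℝ × ℝ) :=
  {x : ℝ × ℝ | f₁ x.1 < x.2 ∧ x.2 < f₂ x.1}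

/-- The stream function `G` of the flux carrier. -/
noncomputable def Gfun (μ f₁ f₂ : ℝ → ℝ) (ε Φ : ℝ) (x : ℝ × ℝ) : ℝ :=
  if (f₁ x.1 + f₂ x.1) / 2 < x.2 then
    Φ * μ (1 + ε * Real.log ((f₂ x.1 - x.2) / (x.2 - (f₁ x.1 + f₂ x.1) / 2)))
  else 0

/-- The first component `g₁ = ∂_{x₂} G` of the flux carrier. -/
noncomputable def gfun₁ (μ f₁ f₂ : ℝ → ℝ) (ε Φ : ℝ) (x : ℝ × ℝ) : ℝ :=
  fderiv ℝ (Gfun μ f₁ f₂ ε Φ) x (0, 1)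

/-- The second component `g₂ = −∂_{x₁} G` of the flux carrier. -/
noncomputable def gfun₂ (μ f₁ f₂ : ℝ → ℝ) (ε Φ : ℝ) (x : ℝ × ℝ) : ℝ :=
  -(fderiv ℝ (Gfun μ f₁ f₂ ε Φ) x (1, 0))

namespace Stmt11

/-- distance to the top boundary -/
noncomputable def av (f₂ : ℝ → ℝ) (x : ℝ × ℝ) : ℝ := f₂ x.1 - x.2
/-- distance to the middle curve -/
noncomputable def bv (f₁ f₂ : ℝ → ℝ) (x : ℝ × ℝ) : ℝ := x.2 - (f₁ x.1 + f₂ x.1) / 2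
/-- the argument of μ -/
noncomputable def ph (f₁ f₂ : ℝ → ℝ) (ε : ℝ) (x : ℝ × ℝ) : ℝ :=
  1 + ε * (Real.log (av f₂ x) - Real.log (bv f₁ f₂ x))
/-- the upper half channel -/
def Wset (f₁ f₂ : ℝ → ℝ) : Set (ℝ × ℝ) :=
  {x : ℝ × ℝ | (f₁ x.1 + f₂ x.1) / 2 < x.2 ∧ x.2 < f₂ x.1}
/-- the lower region where `G` vanishes -/
def Vset (f₁ f₂ : ℝ → ℝ) : Set (ℝ × ℝ) :=
  {x : ℝ × ℝ | x.2 < (f₁ x.1 + 3 * f₂ x.1) / 4}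

noncomputable def K1 (μ f₁ f₂ : ℝ → ℝ) (ε Φ : ℝ) (y : ℝ × ℝ) : ℝ :=
  (Φ * ε) * (deriv μ (ph f₁ f₂ ε y) * (-(av f₂ y)⁻¹ - (bv f₁ f₂ y)⁻¹))

noncomputable def K2 (μ f₁ f₂ : ℝ → ℝ) (ε Φ : ℝ) (y : ℝ × ℝ) : ℝ :=
  -((Φ * ε) * (deriv μ (ph f₁ f₂ ε y) *
    (deriv f₂ y.1 * (av f₂ y)⁻¹ + ((deriv f₁ y.1 + deriv f₂ y.1) / 2) * (bv f₁ f₂ y)⁻¹)))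

lemma Wopen (f₁ f₂ : ℝ → ℝ) (h₁ : Continuous f₁) (h₂ : Continuous f₂) :
    IsOpen (Wset f₁ f₂) := by
  apply IsOpen.inter
  · exact isOpen_lt (((h₁.comp continuous_fst).add (h₂.comp continuous_fst)).div_const 2)
      continuous_snd
  · exact isOpen_lt continuous_snd (h₂.comp continuous_fst)

lemma Vopen (f₁ f₂ : ℝ → ℝ) (h₁ : Continuous f₁) (h₂ : Continuous f₂) :
    IsOpen (Vset f₁ f₂) :=
  isOpen_lt continuous_snd
    (((h₁.comp continuous_fst).add ((continuous_const.mul (h₂.comp continuous_fst)))).div_const 4)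

lemma av_pos {f₁ f₂ : ℝ → ℝ} {x : ℝ × ℝ} (hx : x ∈ Wset f₁ f₂) : 0 < av f₂ x :=
  sub_pos.mpr hx.2

lemma bv_pos {f₁ f₂ : ℝ → ℝ} {x : ℝ × ℝ} (hx : x ∈ Wset f₁ f₂) : 0 < bv f₁ f₂ x :=
  sub_pos.mpr hx.1

lemma G_eq_on_W (μ f₁ f₂ : ℝ → ℝ) (ε Φ : ℝ) {x : ℝ × ℝ} (hx : x ∈ Wset f₁ f₂) :
    Gfun μ f₁ f₂ ε Φ x = Φ * μ (ph f₁ f₂ ε x) := by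
  have ha := av_pos hx
  have hb := bv_pos hx
  rw [Gfun, if_pos hx.1, ph, show (f₂ x.1 - x.2) = av f₂ x from rfl,
    show (x.2 - (f₁ x.1 + f₂ x.1)/2) = bv f₁ f₂ x from rfl,
    Real.log_div (ne_of_gt ha) (ne_of_gt hb)]

/-- a locally-constant function has zero derivative -/
lemma fderiv_zero_of_const_on {F : ℝ × ℝ → ℝ} {S : Set (ℝ × ℝ)} (hS : IsOpen S) (c : ℝ)
    (hc : ∀ y ∈ S, F y = c) {x : ℝ × ℝ} (hx : x ∈ S) : fderiv ℝ F x = 0 := by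
  have h : F =ᶠ[nhds x] (fun _ => c) := Filter.eventuallyEq_of_mem (hS.mem_nhds hx) hc
  rw [h.fderiv_eq, fderiv_fun_const]
  rfl


section Derivs

open ContinuousLinearMap

variable {μ f₁ f₂ : ℝ → ℝ} {ε Φ : ℝ}

lemma hasFDerivAt_av (hf₂ : Differentiable ℝ f₂) (x : ℝ × ℝ) :
    HasFDerivAt (av f₂) (deriv f₂ x.1 • fst ℝ ℝ ℝ - snd ℝ ℝ ℝ) x := by
  have h2 : HasFDerivAt (fun y : ℝ × ℝ => f₂ y.1) (deriv f₂ x.1 • fst ℝ ℝ ℝ) x :=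
    (hf₂ x.1).hasDerivAt.comp_hasFDerivAt x hasFDerivAt_fst
  exact h2.sub hasFDerivAt_snd

lemma hasFDerivAt_bv (hf₁ : Differentiable ℝ f₁) (hf₂ : Differentiable ℝ f₂) (x : ℝ × ℝ) :
    HasFDerivAt (bv f₁ f₂)
      (snd ℝ ℝ ℝ - ((deriv f₁ x.1 + deriv f₂ x.1) / 2) • fst ℝ ℝ ℝ) x := by
  have hm : HasDerivAt (fun t => (f₁ t + f₂ t) / 2) ((deriv f₁ x.1 + deriv f₂ x.1) / 2) x.1 :=
    ((hf₁ x.1).hasDerivAt.add (hf₂ x.1).hasDerivAt).div_const 2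
  exact hasFDerivAt_snd.sub (hm.comp_hasFDerivAt x hasFDerivAt_fst)

/-- the derivative of `ph` -/
noncomputable def Dph (f₁ f₂ : ℝ → ℝ) (ε : ℝ) (x : ℝ × ℝ) : ℝ × ℝ →L[ℝ] ℝ :=
  ε • ((av f₂ x)⁻¹ • (deriv f₂ x.1 • fst ℝ ℝ ℝ - snd ℝ ℝ ℝ) -
       (bv f₁ f₂ x)⁻¹ • (snd ℝ ℝ ℝ - ((deriv f₁ x.1 + deriv f₂ x.1) / 2) • fst ℝ ℝ ℝ))

lemma hasFDerivAt_ph (hf₁ : Differentiable ℝ f₁) (hf₂ : Differentiable ℝ f₂)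
    {x : ℝ × ℝ} (hx : x ∈ Wset f₁ f₂) :
    HasFDerivAt (ph f₁ f₂ ε) (Dph f₁ f₂ ε x) x := by
  have hla := (Real.hasDerivAt_log (ne_of_gt (av_pos hx))).comp_hasFDerivAt x
    (hasFDerivAt_av hf₂ x)
  have hlb := (Real.hasDerivAt_log (ne_of_gt (bv_pos hx))).comp_hasFDerivAt x
    (hasFDerivAt_bv hf₁ hf₂ x)
  exact ((hla.sub hlb).const_mul ε).const_add 1

lemma hasFDerivAt_G (hμ : Differentiable ℝ μ) (hf₁ : Differentiable ℝ f₁)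
    (hf₂ : Differentiable ℝ f₂) {x : ℝ × ℝ} (hx : x ∈ Wset f₁ f₂) :
    HasFDerivAt (Gfun μ f₁ f₂ ε Φ)
      ((Φ * deriv μ (ph f₁ f₂ ε x)) • Dph f₁ f₂ ε x) x := by
  have hH : HasFDerivAt (fun y => Φ * μ (ph f₁ f₂ ε y))
      (Φ • (deriv μ (ph f₁ f₂ ε x) • Dph f₁ f₂ ε x)) x :=
    ((hμ (ph f₁ f₂ ε x)).hasDerivAt.comp_hasFDerivAt x (hasFDerivAt_ph hf₁ hf₂ hx)).const_mul Φ
  have heq : Gfun μ f₁ f₂ ε Φ =ᶠ[nhds x] fun y => Φ * μ (ph f₁ f₂ ε y) :=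
    Filter.eventuallyEq_of_mem (((Wopen f₁ f₂ hf₁.continuous hf₂.continuous)).mem_nhds hx)
      (fun y hy => G_eq_on_W μ f₁ f₂ ε Φ hy)
  have := hH.congr_of_eventuallyEq heq
  rwa [smul_smul] at this

lemma g1_eq (hμ : Differentiable ℝ μ) (hf₁ : Differentiable ℝ f₁)
    (hf₂ : Differentiable ℝ f₂) {x : ℝ × ℝ} (hx : x ∈ Wset f₁ f₂) :
    gfun₁ μ f₁ f₂ ε Φ x = K1 μ f₁ f₂ ε Φ x := by
  rw [gfun₁, (hasFDerivAt_G hμ hf₁ hf₂ hx).fderiv]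
  simp [Dph, K1]
  ring

lemma g2_eq (hμ : Differentiable ℝ μ) (hf₁ : Differentiable ℝ f₁)
    (hf₂ : Differentiable ℝ f₂) {x : ℝ × ℝ} (hx : x ∈ Wset f₁ f₂) :
    gfun₂ μ f₁ f₂ ε Φ x = K2 μ f₁ f₂ ε Φ x := by
  rw [gfun₂, (hasFDerivAt_G hμ hf₁ hf₂ hx).fderiv]
  simp [Dph, K2]
  ring


lemma dg_vals (hμ : ContDiff ℝ (⊤:ℕ∞) μ) (hf₁ : ContDiff ℝ (⊤:ℕ∞) f₁)
    (hf₂ : ContDiff ℝ (⊤:ℕ∞) f₂) {x : ℝ × ℝ} (hx : x ∈ Wset f₁ f₂) :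
    fderiv ℝ (gfun₁ μ f₁ f₂ ε Φ) x (1,0) = (Φ*ε) * (deriv (deriv μ) (ph f₁ f₂ ε x) * (ε * (deriv f₂ x.1 * (av f₂ x)⁻¹ + ((deriv f₁ x.1 + deriv f₂ x.1)/2) * (bv f₁ f₂ x)⁻¹)) * (-(av f₂ x)⁻¹ - (bv f₁ f₂ x)⁻¹) + deriv μ (ph f₁ f₂ ε x) * (deriv f₂ x.1 * ((av f₂ x)^2)⁻¹ - ((deriv f₁ x.1 + deriv f₂ x.1)/2) * ((bv f₁ f₂ x)^2)⁻¹)) ∧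
    fderiv ℝ (gfun₁ μ f₁ f₂ ε Φ) x (0,1) = (Φ*ε) * (deriv (deriv μ) (ph f₁ f₂ ε x) * (ε * (-(av f₂ x)⁻¹ - (bv f₁ f₂ x)⁻¹)) * (-(av f₂ x)⁻¹ - (bv f₁ f₂ x)⁻¹) + deriv μ (ph f₁ f₂ ε x) * (-((av f₂ x)^2)⁻¹ + ((bv f₁ f₂ x)^2)⁻¹)) ∧
    fderiv ℝ (gfun₂ μ f₁ f₂ ε Φ) x (1,0) = -((Φ*ε) * (deriv (deriv μ) (ph f₁ f₂ ε x) * (ε * (deriv f₂ x.1 * (av f₂ x)⁻¹ + ((deriv f₁ x.1 + deriv f₂ x.1)/2) * (bv f₁ f₂ x)⁻¹)) * (deriv f₂ x.1 * (av f₂ x)⁻¹ + ((deriv f₁ x.1 + deriv f₂ x.1)/2) * (bv f₁ f₂ x)⁻¹) + deriv μ (ph f₁ f₂ ε x) * (deriv (deriv f₂) x.1 * (av f₂ x)⁻¹ - deriv f₂ x.1^2 * ((av f₂ x)^2)⁻¹ + ((deriv (deriv f₁) x.1 + deriv (deriv f₂) x.1)/2) * (bv f₁ f₂ x)⁻¹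 + ((deriv f₁ x.1 + deriv f₂ x.1)/2)^2 * ((bv f₁ f₂ x)^2)⁻¹))) ∧
    fderiv ℝ (gfun₂ μ f₁ f₂ ε Φ) x (0,1) = -((Φ*ε) * (deriv (deriv μ) (ph f₁ f₂ ε x) * (ε * (-(av f₂ x)⁻¹ - (bv f₁ f₂ x)⁻¹)) * (deriv f₂ x.1 * (av f₂ x)⁻¹ + ((deriv f₁ x.1 + deriv f₂ x.1)/2) * (bv f₁ f₂ x)⁻¹) + deriv μ (ph f₁ f₂ ε x) * (deriv f₂ x.1 * ((av f₂ x)^2)⁻¹ - ((deriv f₁ x.1 + deriv f₂ x.1)/2) * ((bv f₁ f₂ x)^2)⁻¹))) := by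
  have hdμ : Differentiable ℝ μ := hμ.differentiable (by simp)
  have hdf₁ : Differentiable ℝ f₁ := hf₁.differentiable (by simp)
  have hdf₂ : Differentiable ℝ f₂ := hf₂.differentiable (by simp)
  have hdμ' : Differentiable ℝ (deriv μ) :=
    ((contDiff_infty_iff_deriv.mp hμ).2).differentiable (by simp)
  have hddf₁ : Differentiable ℝ (deriv f₁) :=
    ((contDiff_infty_iff_deriv.mp hf₁).2).differentiable (by simp)
  have hddf₂ : Differentiable ℝ (deriv f₂) :=
    ((contDiff_infty_iff_deriv.mp hf₂).2).differentiable (by simp)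
  have hW := Wopen f₁ f₂ hdf₁.continuous hdf₂.continuous
  have h1 : fderiv ℝ (gfun₁ μ f₁ f₂ ε Φ) x = fderiv ℝ (K1 μ f₁ f₂ ε Φ) x :=
    Filter.EventuallyEq.fderiv_eq (Filter.eventuallyEq_of_mem (hW.mem_nhds hx)
      fun y hy => g1_eq hdμ hdf₁ hdf₂ hy)
  have h2 : fderiv ℝ (gfun₂ μ f₁ f₂ ε Φ) x = fderiv ℝ (K2 μ f₁ f₂ ε Φ) x :=
    Filter.EventuallyEq.fderiv_eq (Filter.eventuallyEq_of_mem (hW.mem_nhds hx)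
      fun y hy => g2_eq hdμ hdf₁ hdf₂ hy)
  have hA := hasFDerivAt_av hdf₂ x
  have hB := hasFDerivAt_bv hdf₁ hdf₂ x
  have hph := hasFDerivAt_ph (ε := ε) hdf₁ hdf₂ hx
  have hm : HasFDerivAt (fun y => deriv μ (ph f₁ f₂ ε y))
      (deriv (deriv μ) (ph f₁ f₂ ε x) • Dph f₁ f₂ ε x) x :=
    (hdμ' (ph f₁ f₂ ε x)).hasDerivAt.comp_hasFDerivAt x hph
  have hinva := (hasDerivAt_inv (ne_of_gt (av_pos hx))).comp_hasFDerivAt x hA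
  have hinvb := (hasDerivAt_inv (ne_of_gt (bv_pos hx))).comp_hasFDerivAt x hB
  have hX := (hinva.neg).sub hinvb
  have hp : HasFDerivAt (fun y : ℝ × ℝ => deriv f₂ y.1)
      (deriv (deriv f₂) x.1 • ContinuousLinearMap.fst ℝ ℝ ℝ) x :=
    (hddf₂ x.1).hasDerivAt.comp_hasFDerivAt x hasFDerivAt_fst
  have hq : HasFDerivAt (fun y : ℝ × ℝ => (deriv f₁ y.1 + deriv f₂ y.1)/2)
      (((deriv (deriv f₁) x.1 + deriv (deriv f₂) x.1)/2) • ContinuousLinearMap.fst ℝ ℝ ℝ) x :=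
    (((hddf₁ x.1).hasDerivAt.add (hddf₂ x.1).hasDerivAt).div_const 2).comp_hasFDerivAt x
      hasFDerivAt_fst
  have hχ := (hp.mul hinva).add (hq.mul hinvb)
  have hK1 : HasFDerivAt (K1 μ f₁ f₂ ε Φ) _ x := (hm.mul hX).const_mul (Φ*ε)
  have hK2 : HasFDerivAt (K2 μ f₁ f₂ ε Φ) _ x := ((hm.mul hχ).const_mul (Φ*ε)).neg
  refine ⟨?_, ?_, ?_, ?_⟩
  · rw [h1, hK1.fderiv]; simp [Dph]; ring
  · rw [h1, hK1.fderiv]; simp [Dph]; ring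
  · rw [h2, hK2.fderiv]; simp [Dph]; ring
  · rw [h2, hK2.fderiv]; simp [Dph]; ring

end Derivs


lemma exists_bound {g : ℝ → ℝ} (hg : Continuous g) (h0 : ∀ t : ℝ, t < 0 → g t = 0)
    (h1 : ∀ t : ℝ, 1 < t → g t = 0) : ∃ M : ℝ, 0 < M ∧ ∀ t, |g t| ≤ M := by
  obtain ⟨c, hc⟩ := (isCompact_Icc (a := (0:ℝ)) (b := 1)).exists_bound_of_continuousOn
    hg.continuousOn
  refine ⟨|c| + 1, by positivity, fun t => ?_⟩
  rcases lt_or_ge t 0 with h | h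
  · rw [h0 t h]; simp; positivity
  rcases le_or_gt t 1 with h' | h'
  · have := hc t ⟨h, h'⟩
    rw [Real.norm_eq_abs] at this
    calc |g t| ≤ c := this
      _ ≤ |c| + 1 := by linarith [le_abs_self c]
  · rw [h1 t h']; simp; positivity

lemma zeros_on (μ f₁ f₂ : ℝ → ℝ) (ε Φ : ℝ) (S : Set (ℝ × ℝ)) (hS : IsOpen S) (c : ℝ)
    (hc : ∀ y ∈ S, Gfun μ f₁ f₂ ε Φ y = c) {x : ℝ × ℝ} (hx : x ∈ S) :
    gfun₁ μ f₁ f₂ ε Φ x = 0 ∧ gfun₂ μ f₁ f₂ ε Φ x = 0 ∧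
    fderiv ℝ (gfun₁ μ f₁ f₂ ε Φ) x = 0 ∧ fderiv ℝ (gfun₂ μ f₁ f₂ ε Φ) x = 0 := by
  have hg1 : ∀ y ∈ S, gfun₁ μ f₁ f₂ ε Φ y = 0 := fun y hy => by
    rw [gfun₁, fderiv_zero_of_const_on hS c hc hy]; rfl
  have hg2 : ∀ y ∈ S, gfun₂ μ f₁ f₂ ε Φ y = 0 := fun y hy => by
    rw [gfun₂, fderiv_zero_of_const_on hS c hc hy]; simp
  exact ⟨hg1 x hx, hg2 x hx, fderiv_zero_of_const_on hS 0 hg1 hx,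
    fderiv_zero_of_const_on hS 0 hg2 hx⟩

lemma bnd1 {m' D c m u M₂ DD CC M₁ UU : ℝ} (h1 : |m'| ≤ M₂) (h2 : |D| ≤ DD)
    (h3 : |c| ≤ CC) (h4 : |m| ≤ M₁) (h5 : |u| ≤ UU) :
    |m' * D * c + m * u| ≤ M₂ * DD * CC + M₁ * UU := by
  have h6 : |m' * D * c| ≤ M₂ * DD * CC := by
    rw [abs_mul, abs_mul]
    exact mul_le_mul (mul_le_mul h1 h2 (abs_nonneg _) ((abs_nonneg m').trans h1)) h3
      (abs_nonneg _) (mul_nonneg ((abs_nonneg _).trans h1) ((abs_nonneg _).trans h2))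
  have h7 : |m * u| ≤ M₁ * UU := by
    rw [abs_mul]
    exact mul_le_mul h4 h5 (abs_nonneg _) ((abs_nonneg m).trans h4)
  linarith [abs_add_le (m' * D * c) (m * u)]

lemma sqrt2_le (a b : ℝ) : Real.sqrt (a^2 + b^2) ≤ |a| + |b| := by
  have h : a^2 + b^2 ≤ (|a| + |b|)^2 := by
    nlinarith [sq_abs a, sq_abs b, mul_nonneg (abs_nonneg a) (abs_nonneg b)]
  calc Real.sqrt (a^2 + b^2) ≤ Real.sqrt ((|a| + |b|)^2) := Real.sqrt_le_sqrt h
    _ = |a| + |b| := Real.sqrt_sq (by positivity)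

lemma sqrt4_le (a b c d : ℝ) : Real.sqrt (a^2 + b^2 + c^2 + d^2) ≤ |a| + |b| + |c| + |d| := by
  have h : a^2 + b^2 + c^2 + d^2 ≤ (|a| + |b| + |c| + |d|)^2 := by
    nlinarith [sq_abs a, sq_abs b, sq_abs c, sq_abs d,
      mul_nonneg (abs_nonneg a) (abs_nonneg b), mul_nonneg (abs_nonneg a) (abs_nonneg c),
      mul_nonneg (abs_nonneg a) (abs_nonneg d), mul_nonneg (abs_nonneg b) (abs_nonneg c),
      mul_nonneg (abs_nonneg b) (abs_nonneg d), mul_nonneg (abs_nonneg c) (abs_nonneg d)]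
  calc Real.sqrt (a^2 + b^2 + c^2 + d^2) ≤ Real.sqrt ((|a| + |b| + |c| + |d|)^2) :=
        Real.sqrt_le_sqrt h
    _ = |a| + |b| + |c| + |d| := Real.sqrt_sq (by positivity)

lemma ph_contOn {f₁ f₂ : ℝ → ℝ} (hf₁ : Continuous f₁) (hf₂ : Continuous f₂) (ε : ℝ) :
    ContinuousOn (ph f₁ f₂ ε) (Wset f₁ f₂) := by
  have hav : Continuous (av f₂) := (hf₂.comp continuous_fst).sub continuous_snd
  have hbv : Continuous (bv f₁ f₂) := continuous_snd.sub
    (((hf₁.comp continuous_fst).add (hf₂.comp continuous_fst)).div_const 2)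
  apply ContinuousOn.add continuousOn_const
  apply ContinuousOn.mul continuousOn_const
  exact (hav.continuousOn.log fun y hy => ne_of_gt (av_pos hy)).sub
    (hbv.continuousOn.log fun y hy => ne_of_gt (bv_pos hy))


lemma arL1 {ε la lb : ℝ} (hε0 : 0 < ε) (h : 1 + ε * (la - lb) ≤ 1) : la ≤ lb := by nlinarith

lemma arL2 {ε la lb : ℝ} (hε0 : 0 < ε) (h : 0 ≤ 1 + ε * (la - lb)) : lb - 1/ε ≤ la := by
  have h3 : ε * (1/ε) = 1 := by field_simp
  nlinarith

lemma arC1 {ia ib B E u : ℝ} (hia0 : 0 < ia) (hib0 : 0 < ib) (hia : ia ≤ 4*E*u)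
    (hib : ib ≤ 4*u) (hB : 1 ≤ B) (hE : 1 ≤ E) (hu : 0 < u) : |-ia - ib| ≤ 8*(B*E)*u := by
  have he : |-ia - ib| = ia + ib := by
    rw [show -ia - ib = -(ia + ib) by ring, abs_neg, abs_of_pos (by linarith)]
  have h1 : 4*E + 4 ≤ 8*(B*E) := by nlinarith
  have h2 := mul_le_mul_of_nonneg_right h1 hu.le
  rw [he]; nlinarith

lemma arC3 {p q ia ib B E u : ℝ} (hp : |p| ≤ B) (hq : |q| ≤ B) (hia0 : 0 < ia)
    (hib0 : 0 < ib) (hia : ia ≤ 4*E*u) (hib : ib ≤ 4*u) (hB : 1 ≤ B) (hE : 1 ≤ E)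
    (hu : 0 < u) : |p * ia + q * ib| ≤ 8*(B*E)*u := by
  have h1 : |p*ia| ≤ B*(4*E*u) := by
    rw [abs_mul, abs_of_pos hia0]
    exact mul_le_mul hp hia hia0.le (by linarith [abs_nonneg p])
  have h2 : |q*ib| ≤ B*(4*u) := by
    rw [abs_mul, abs_of_pos hib0]
    exact mul_le_mul hq hib hib0.le (by linarith [abs_nonneg q])
  have h3 := abs_add_le (p*ia) (q*ib)
  have h4 : B*(4*E) + B*4 ≤ 8*(B*E) := by nlinarith
  have h5 := mul_le_mul_of_nonneg_right h4 hu.le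
  nlinarith

lemma arU1 {p q ia2 ib2 B E u γ : ℝ} (hp : |p| ≤ B) (hq : |q| ≤ B) (hia20 : 0 < ia2)
    (hib20 : 0 < ib2) (hia2 : ia2 ≤ 16*E^2*u^2) (hib2 : ib2 ≤ 16*u^2) (hB : 1 ≤ B)
    (hE : 1 ≤ E) (hu : 0 < u) (hγ : 0 ≤ γ) :
    |p * ia2 - q * ib2| ≤ 40*(B*E)^2*(γ+1)*u^2 := by
  have h1 : |p*ia2| ≤ B*(16*E^2*u^2) := by
    rw [abs_mul, abs_of_pos hia20]
    exact mul_le_mul hp hia2 hia20.le (by linarith [abs_nonneg p])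
  have h2 : |q*ib2| ≤ B*(16*u^2) := by
    rw [abs_mul, abs_of_pos hib20]
    exact mul_le_mul hq hib2 hib20.le (by linarith [abs_nonneg q])
  have h3 := abs_sub (p*ia2) (q*ib2)
  have h4 : B*(16*E^2) + B*16 ≤ 40*(B*E)^2*(γ+1) := by
    nlinarith [mul_nonneg (sub_nonneg.mpr hB) (sq_nonneg E), sq_nonneg (B*E),
      mul_nonneg hγ (sq_nonneg (B*E)), mul_nonneg (sub_nonneg.mpr hE) (mul_nonneg (by linarith) (by linarith) : (0:ℝ) ≤ B*E)]
  have h5 := mul_le_mul_of_nonneg_right h4 (sq_nonneg u)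
  nlinarith

lemma arU2 {ia2 ib2 B E u γ : ℝ} (hia20 : 0 < ia2) (hib20 : 0 < ib2)
    (hia2 : ia2 ≤ 16*E^2*u^2) (hib2 : ib2 ≤ 16*u^2) (hB : 1 ≤ B) (hE : 1 ≤ E)
    (hu : 0 < u) (hγ : 0 ≤ γ) : |-ia2 + ib2| ≤ 40*(B*E)^2*(γ+1)*u^2 := by
  have h3 := abs_add_le (-ia2) ib2
  rw [abs_neg, abs_of_pos hia20, abs_of_pos hib20] at h3
  have h4 : 16*E^2 + 16 ≤ 40*(B*E)^2*(γ+1) := by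
    nlinarith [mul_nonneg (sub_nonneg.mpr hB) (sq_nonneg E), sq_nonneg (B*E),
      mul_nonneg hγ (sq_nonneg (B*E)), mul_nonneg (sub_nonneg.mpr hE) (mul_nonneg (by linarith) (by linarith) : (0:ℝ) ≤ B*E),
      sq_nonneg E]
  have h5 := mul_le_mul_of_nonneg_right h4 (sq_nonneg u)
  nlinarith

lemma arU3 {c2 cq p q ia ib ia2 ib2 B E u γ : ℝ} (hc2 : |c2| ≤ γ*u) (hcq : |cq| ≤ γ*u)
    (hp : |p| ≤ B) (hq : |q| ≤ B) (hia0 : 0 < ia) (hib0 : 0 < ib) (hia20 : 0 < ia2)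
    (hib20 : 0 < ib2) (hia : ia ≤ 4*E*u) (hib : ib ≤ 4*u) (hia2 : ia2 ≤ 16*E^2*u^2)
    (hib2 : ib2 ≤ 16*u^2) (hB : 1 ≤ B) (hE : 1 ≤ E) (hu : 0 < u) (hγ : 0 ≤ γ) :
    |c2 * ia - p^2 * ia2 + cq * ib + q^2 * ib2| ≤ 40*(B*E)^2*(γ+1)*u^2 := by
  have hγu : 0 ≤ γ*u := mul_nonneg hγ hu.le
  have h1 : |c2*ia| ≤ (γ*u)*(4*E*u) := by
    rw [abs_mul, abs_of_pos hia0]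
    exact mul_le_mul hc2 hia hia0.le hγu
  have h2 : |p^2*ia2| ≤ B^2*(16*E^2*u^2) := by
    rw [abs_mul, abs_of_pos hia20, abs_pow]
    have hp2 : |p|^2 ≤ B^2 := pow_le_pow_left₀ (abs_nonneg _) hp 2
    exact mul_le_mul hp2 hia2 hia20.le (by positivity)
  have h3 : |cq*ib| ≤ (γ*u)*(4*u) := by
    rw [abs_mul, abs_of_pos hib0]
    exact mul_le_mul hcq hib hib0.le hγu
  have h4 : |q^2*ib2| ≤ B^2*(16*u^2) := by
    rw [abs_mul, abs_of_pos hib20, abs_pow]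
    have hq2 : |q|^2 ≤ B^2 := pow_le_pow_left₀ (abs_nonneg _) hq 2
    exact mul_le_mul hq2 hib2 hib20.le (by positivity)
  have h5 : |c2 * ia - p^2 * ia2 + cq * ib + q^2 * ib2| ≤
      |c2*ia| + |p^2*ia2| + |cq*ib| + |q^2*ib2| := by
    calc |c2 * ia - p^2 * ia2 + cq * ib + q^2 * ib2| ≤
          |c2 * ia - p^2 * ia2 + cq * ib| + |q^2*ib2| := abs_add_le _ _
      _ ≤ |c2*ia - p^2*ia2| + |cq*ib| + |q^2*ib2| := by
          linarith [abs_add_le (c2*ia - p^2*ia2) (cq*ib)]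
      _ ≤ _ := by linarith [abs_sub (c2*ia) (p^2*ia2)]
  -- 4*E*γ*u² + 16B²E²u² + 4*γ*u² + 16B²u² ≤ 40 (BE)²(γ+1) u²
  have k1 : (γ*u)*(4*E*u) + B^2*(16*E^2*u^2) + (γ*u)*(4*u) + B^2*(16*u^2) ≤
      40*(B*E)^2*(γ+1)*u^2 := by
    have e1 : (γ*u)*(4*E*u) = (4*E*γ)*u^2 := by ring
    have e2 : (γ*u)*(4*u) = (4*γ)*u^2 := by ring
    have h6 : 4*E*γ + 16*B^2*E^2 + 4*γ + 16*B^2 ≤ 40*(B*E)^2*(γ+1) := by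
      have w1 : 1 ≤ B^2 := by nlinarith
      have w2 : E ≤ E^2 := by nlinarith
      have w3 : E^2 ≤ B^2*E^2 := by nlinarith [sq_nonneg E]
      have g1 := mul_le_mul_of_nonneg_right (show E ≤ B^2*E^2 by linarith) hγ
      have g2 := mul_le_mul_of_nonneg_right (show (1:ℝ) ≤ B^2*E^2 by linarith) hγ
      have g3 : 16*B^2 ≤ 16*(B^2*E^2) := by nlinarith [sq_nonneg B]
      have hnn : 0 ≤ B^2*E^2*γ := by positivity
      have hpp : (0:ℝ) ≤ B^2*E^2 := by positivity
      have e : (B*E)^2 = B^2*E^2 := by ring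
      rw [e]; linarith
    have h7 := mul_le_mul_of_nonneg_right h6 (sq_nonneg u)
    linarith [e1, e2, h7]
  linarith

lemma arFin {Z γ : ℝ} (hZ : 0 ≤ Z) (hγ : 0 ≤ γ) :
    256*Z + 160*(Z*(γ+1)) ≤ 512*(Z*(γ+1)) := by nlinarith [mul_nonneg hZ hγ]

end Stmt11

open Stmt11 in
set_option maxHeartbeats 2000000 in
theorem stmt_11 (μ : ℝ → ℝ)
    (hμsmooth : ContDiff ℝ (⊤ : ℕ∞) μ) (hμanti : Antitone μ)
    (hμ₁ : ∀ t : ℝ, t ≤ 0 → μ t = 1) (hμ₀ : ∀ t : ℝ, 1 ≤ t → μ t = 0)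
    (β : ℝ) (ε : ℝ) (hε : ε ∈ Ioo (0 : ℝ) 1) (γ : ℝ) (hγ : 0 ≤ γ) :
    ∃ C Cγ : ℝ, 0 < C ∧ 0 < Cγ ∧
      ∀ (f₁ f₂ : ℝ → ℝ) (d Φ : ℝ),
        ContDiff ℝ (⊤ : ℕ∞) f₁ → ContDiff ℝ (⊤ : ℕ∞) f₂ →
        0 < d → (∀ x₁ : ℝ, d ≤ f₂ x₁ - f₁ x₁) →
        (∀ x₁ : ℝ, |deriv f₁ x₁| ≤ β) → (∀ x₁ : ℝ, |deriv f₂ x₁| ≤ β) →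
        (∀ x₁ : ℝ, |deriv (deriv f₁) x₁ * (f₂ x₁ - f₁ x₁)| ≤ γ) →
        (∀ x₁ : ℝ, |deriv (deriv f₂) x₁ * (f₂ x₁ - f₁ x₁)| ≤ γ) →
        0 ≤ Φ →
        ∀ x ∈ channel f₁ f₂,
          Real.sqrt ((gfun₁ μ f₁ f₂ ε Φ x) ^ 2 + (gfun₂ μ f₁ f₂ ε Φ x) ^ 2) ≤
            C * Φ / (f₂ x.1 - f₁ x.1) ∧
          Real.sqrt ((fderiv ℝ (gfun₁ μ f₁ f₂ ε Φ) x (1, 0)) ^ 2 +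
              (fderiv ℝ (gfun₁ μ f₁ f₂ ε Φ) x (0, 1)) ^ 2 +
              (fderiv ℝ (gfun₂ μ f₁ f₂ ε Φ) x (1, 0)) ^ 2 +
              (fderiv ℝ (gfun₂ μ f₁ f₂ ε Φ) x (0, 1)) ^ 2) ≤
            Cγ * Φ / (f₂ x.1 - f₁ x.1) ^ 2 := by
  obtain ⟨hε0, hε1⟩ := hε
  have hμd : Differentiable ℝ μ := hμsmooth.differentiable (by simp)
  have hcd1 : ContDiff ℝ (⊤:ℕ∞) (deriv μ) := (contDiff_infty_iff_deriv.mp hμsmooth).2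
  have hcd2 : ContDiff ℝ (⊤:ℕ∞) (deriv (deriv μ)) := (contDiff_infty_iff_deriv.mp hcd1).2
  have hd0 : ∀ t : ℝ, t < 0 → deriv μ t = 0 := by
    intro t ht
    have h : μ =ᶠ[nhds t] fun _ => 1 :=
      Filter.eventuallyEq_of_mem (Iio_mem_nhds ht) (fun s hs => hμ₁ s (le_of_lt hs))
    rw [h.deriv_eq]; exact deriv_const t 1
  have hd1 : ∀ t : ℝ, 1 < t → deriv μ t = 0 := by
    intro t ht
    have h : μ =ᶠ[nhds t] fun _ => 0 :=
      Filter.eventuallyEq_of_mem (Ioi_mem_nhds ht) (fun s hs => hμ₀ s (le_of_lt hs))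
    rw [h.deriv_eq]; exact deriv_const t 0
  have hdd0 : ∀ t : ℝ, t < 0 → deriv (deriv μ) t = 0 := by
    intro t ht
    have h : deriv μ =ᶠ[nhds t] fun _ => 0 :=
      Filter.eventuallyEq_of_mem (Iio_mem_nhds ht) (fun s hs => hd0 s hs)
    rw [h.deriv_eq]; exact deriv_const t 0
  have hdd1 : ∀ t : ℝ, 1 < t → deriv (deriv μ) t = 0 := by
    intro t ht
    have h : deriv μ =ᶠ[nhds t] fun _ => 0 :=
      Filter.eventuallyEq_of_mem (Ioi_mem_nhds ht) (fun s hs => hd1 s hs)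
    rw [h.deriv_eq]; exact deriv_const t 0
  obtain ⟨M₁, hM₁, hM₁b⟩ := exists_bound hcd1.continuous hd0 hd1
  obtain ⟨M₂, hM₂, hM₂b⟩ := exists_bound hcd2.continuous hdd0 hdd1
  set M : ℝ := M₁ + M₂ + 1 with hMdef
  set B : ℝ := |β| + 1 with hBdef
  set E : ℝ := Real.exp (1/ε) with hEdef
  have hE1 : (1:ℝ) ≤ E := Real.one_le_exp_iff.mpr (by positivity)
  have hE0 : (0:ℝ) < E := Real.exp_pos _
  have hB1 : (1:ℝ) ≤ B := by have := abs_nonneg β; rw [hBdef]; linarith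
  have hM1 : (1:ℝ) ≤ M := by rw [hMdef]; linarith
  refine ⟨16*M*B*E, 512*M*(B*E)^2*(γ+1), by positivity, by positivity, ?_⟩
  intro f₁ f₂ d Φ hf₁ hf₂ hd hdle hb₁ hb₂ hc₁ hc₂ hΦ x hxΩ
  have hdf₁ : Differentiable ℝ f₁ := hf₁.differentiable (by simp)
  have hdf₂ : Differentiable ℝ f₂ := hf₂.differentiable (by simp)
  have hf : 0 < f₂ x.1 - f₁ x.1 := lt_of_lt_of_le hd (hdle x.1)
  have hRHS1 : 0 ≤ 16*M*B*E*Φ / (f₂ x.1 - f₁ x.1) := div_nonneg (by positivity) hf.le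
  have hRHS2 : 0 ≤ 512*M*(B*E)^2*(γ+1)*Φ / (f₂ x.1 - f₁ x.1)^2 :=
    div_nonneg (by positivity) (by positivity)
  by_cases hV : x.2 < (f₁ x.1 + 3 * f₂ x.1) / 4
  · -- the lower region, where G vanishes identically
    have hGz : ∀ y ∈ Vset f₁ f₂, Gfun μ f₁ f₂ ε Φ y = 0 := by
      intro y hy
      simp only [Vset, Set.mem_setOf_eq] at hy
      rw [Gfun]
      split_ifs with h
      · have hb : 0 < y.2 - (f₁ y.1 + f₂ y.1)/2 := sub_pos.mpr h
        have ha : y.2 - (f₁ y.1 + f₂ y.1)/2 < f₂ y.1 - y.2 := by linarith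
        have hr : 1 < (f₂ y.1 - y.2)/(y.2 - (f₁ y.1 + f₂ y.1)/2) := (one_lt_div hb).mpr ha
        have hlog := Real.log_pos hr
        have h1 : (1:ℝ) ≤ 1 + ε * Real.log ((f₂ y.1 - y.2)/(y.2 - (f₁ y.1 + f₂ y.1)/2)) := by
          have := mul_pos hε0 hlog; linarith
        rw [hμ₀ _ h1, mul_zero]
      · rfl
    obtain ⟨hz1, hz2, hz3, hz4⟩ := zeros_on μ f₁ f₂ ε Φ _
      (Vopen f₁ f₂ hdf₁.continuous hdf₂.continuous) 0 hGz hV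
    constructor
    · rw [hz1, hz2]
      simpa using hRHS1
    · rw [hz3, hz4]
      simpa using hRHS2
  · push_neg at hV
    have hxW : x ∈ Wset f₁ f₂ := by
      refine ⟨?_, hxΩ.2⟩
      have := hdle x.1
      show (f₁ x.1 + f₂ x.1)/2 < x.2
      linarith
    have hWo := Wopen f₁ f₂ hdf₁.continuous hdf₂.continuous
    have hphc := ph_contOn hdf₁.continuous hdf₂.continuous ε
    by_cases hup : 1 < ph f₁ f₂ ε x
    · -- above the support of μ': G = 0 locally
      have hSo := hphc.isOpen_inter_preimage (t := Set.Ioi 1) hWo isOpen_Ioi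
      have hGz : ∀ y ∈ Wset f₁ f₂ ∩ ph f₁ f₂ ε ⁻¹' (Set.Ioi 1),
          Gfun μ f₁ f₂ ε Φ y = 0 := fun y hy => by
        rw [G_eq_on_W μ f₁ f₂ ε Φ hy.1, hμ₀ _ (le_of_lt hy.2), mul_zero]
      obtain ⟨hz1, hz2, hz3, hz4⟩ := zeros_on μ f₁ f₂ ε Φ _ hSo 0 hGz ⟨hxW, hup⟩
      constructor
      · rw [hz1, hz2]; simpa using hRHS1
      · rw [hz3, hz4]; simpa using hRHS2
    push_neg at hup
    by_cases hlo : ph f₁ f₂ ε x < 0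
    · -- below the support of μ': G = Φ locally
      have hSo := hphc.isOpen_inter_preimage (t := Set.Iio 0) hWo isOpen_Iio
      have hGz : ∀ y ∈ Wset f₁ f₂ ∩ ph f₁ f₂ ε ⁻¹' (Set.Iio 0),
          Gfun μ f₁ f₂ ε Φ y = Φ := fun y hy => by
        rw [G_eq_on_W μ f₁ f₂ ε Φ hy.1, hμ₁ _ (le_of_lt hy.2), mul_one]
      obtain ⟨hz1, hz2, hz3, hz4⟩ := zeros_on μ f₁ f₂ ε Φ _ hSo Φ hGz ⟨hxW, hlo⟩
      constructor
      · rw [hz1, hz2]; simpa using hRHS1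
      · rw [hz3, hz4]; simpa using hRHS2
    push_neg at hlo
    -- the main case: 0 ≤ ph x ≤ 1
    have hg1 := g1_eq (ε := ε) (Φ := Φ) hμd hdf₁ hdf₂ hxW
    have hg2 := g2_eq (ε := ε) (Φ := Φ) hμd hdf₁ hdf₂ hxW
    obtain ⟨ht1, ht2, ht3, ht4⟩ := dg_vals (ε := ε) (Φ := Φ) hμsmooth hf₁ hf₂ hxW
    unfold K1 at hg1
    unfold K2 at hg2
    have hphx : ph f₁ f₂ ε x = 1 + ε * (Real.log (av f₂ x) - Real.log (bv f₁ f₂ x)) := rfl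
    have ha0 : 0 < av f₂ x := av_pos hxW
    have hb0 : 0 < bv f₁ f₂ x := bv_pos hxW
    set a : ℝ := av f₂ x with hadef
    set b : ℝ := bv f₁ f₂ x with hbdef
    set u : ℝ := (f₂ x.1 - f₁ x.1)⁻¹ with hudef
    have hu0 : 0 < u := inv_pos.mpr hf
    have hfu : (f₂ x.1 - f₁ x.1) * u = 1 := mul_inv_cancel₀ (ne_of_gt hf)
    have hab : a + b = (f₂ x.1 - f₁ x.1)/2 := by
      rw [hadef, hbdef]; simp only [av, bv]; ring
    -- bounds on a and b from 0 ≤ ph x ≤ 1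
    have hle : a ≤ b := by
      have h1 : Real.log a ≤ Real.log b := by
        rw [hphx] at hup; exact arL1 hε0 hup
      have := Real.exp_le_exp.mpr h1
      rwa [Real.exp_log ha0, Real.exp_log hb0] at this
    have hge : b * E⁻¹ ≤ a := by
      have h1 : Real.log b - 1/ε ≤ Real.log a := by
        rw [hphx] at hlo; exact arL2 hε0 hlo
      calc b * E⁻¹ = Real.exp (Real.log b - 1/ε) := by
            rw [Real.exp_sub, Real.exp_log hb0, hEdef]
            exact (div_eq_mul_inv _ _).symm
        _ ≤ Real.exp (Real.log a) := Real.exp_le_exp.mpr h1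
        _ = a := Real.exp_log ha0
    have hblow : (f₂ x.1 - f₁ x.1)/4 ≤ b := by linarith
    have halow : (f₂ x.1 - f₁ x.1)/4 * E⁻¹ ≤ a := by
      have h := mul_le_mul_of_nonneg_right hblow (inv_nonneg.mpr hE0.le)
      linarith
    have hia : a⁻¹ ≤ 4*E*u := by
      have h1 : a⁻¹ ≤ ((f₂ x.1 - f₁ x.1)/4 * E⁻¹)⁻¹ := inv_anti₀ (by positivity) halow
      have h2 : ((f₂ x.1 - f₁ x.1)/4 * E⁻¹)⁻¹ = 4*E*u := by
        rw [hudef]; field_simp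
      linarith
    have hib : b⁻¹ ≤ 4*u := by
      have h1 : b⁻¹ ≤ ((f₂ x.1 - f₁ x.1)/4)⁻¹ := inv_anti₀ (by positivity) hblow
      have h2 : ((f₂ x.1 - f₁ x.1)/4)⁻¹ = 4*u := by rw [hudef]; field_simp
      linarith
    have hia0 : 0 < a⁻¹ := inv_pos.mpr ha0
    have hib0 : 0 < b⁻¹ := inv_pos.mpr hb0
    have hia2 : (a^2)⁻¹ ≤ 16*E^2*u^2 := by
      rw [← inv_pow]
      calc a⁻¹^2 ≤ (4*E*u)^2 := pow_le_pow_left₀ hia0.le hia 2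
        _ = 16*E^2*u^2 := by ring
    have hib2 : (b^2)⁻¹ ≤ 16*u^2 := by
      rw [← inv_pow]
      calc b⁻¹^2 ≤ (4*u)^2 := pow_le_pow_left₀ hib0.le hib 2
        _ = 16*u^2 := by ring
    -- slope and curvature bounds
    have hβB : β ≤ B := by rw [hBdef]; linarith [le_abs_self β]
    have hp : |deriv f₂ x.1| ≤ B := (hb₂ x.1).trans hβB
    have hq : |(deriv f₁ x.1 + deriv f₂ x.1)/2| ≤ B := by
      have h1 := hb₁ x.1; have h2 := hb₂ x.1
      have h3 := abs_add_le (deriv f₁ x.1) (deriv f₂ x.1)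
      rw [abs_div, abs_two]
      rw [div_le_iff₀ (by norm_num : (0:ℝ) < 2)]
      linarith
    have hγu : ∀ c : ℝ, |c * (f₂ x.1 - f₁ x.1)| ≤ γ → |c| ≤ γ * u := by
      intro c hc
      rw [abs_mul, abs_of_pos hf] at hc
      calc |c| = |c| * ((f₂ x.1 - f₁ x.1) * u) := by rw [hfu, mul_one]
        _ = (|c| * (f₂ x.1 - f₁ x.1)) * u := by ring
        _ ≤ γ * u := mul_le_mul_of_nonneg_right hc hu0.le
    have hc2 : |deriv (deriv f₂) x.1| ≤ γ * u := hγu _ (hc₂ x.1)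
    have hcq : |(deriv (deriv f₁) x.1 + deriv (deriv f₂) x.1)/2| ≤ γ * u := by
      have h1 := hγu _ (hc₁ x.1); have h2 := hγu _ (hc₂ x.1)
      have h3 := abs_add_le (deriv (deriv f₁) x.1) (deriv (deriv f₂) x.1)
      rw [abs_div, abs_two, div_le_iff₀ (by norm_num : (0:ℝ) < 2)]
      linarith
    -- μ bounds
    have hmv : |deriv μ (ph f₁ f₂ ε x)| ≤ M := (hM₁b _).trans (by rw [hMdef]; linarith)
    have hmv' : |deriv (deriv μ) (ph f₁ f₂ ε x)| ≤ M := (hM₂b _).trans (by rw [hMdef]; linarith)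
    -- component bounds
    have habsia : |a⁻¹| ≤ 4*E*u := by rwa [abs_of_pos hia0]
    have habsib : |b⁻¹| ≤ 4*u := by rwa [abs_of_pos hib0]
    have hεabs : |ε| ≤ 1 := by rw [abs_of_pos hε0]; linarith
    have hC1 : |-a⁻¹ - b⁻¹| ≤ 8*(B*E)*u := arC1 hia0 hib0 hia hib hB1 hE1 hu0
    have hC3 : |deriv f₂ x.1 * a⁻¹ + (deriv f₁ x.1 + deriv f₂ x.1)/2 * b⁻¹| ≤ 8*(B*E)*u :=
      arC3 hp hq hia0 hib0 hia hib hB1 hE1 hu0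
    have hD1 : |ε * (deriv f₂ x.1 * a⁻¹ + (deriv f₁ x.1 + deriv f₂ x.1)/2 * b⁻¹)| ≤
        8*(B*E)*u := by
      rw [abs_mul]
      calc |ε| * |deriv f₂ x.1 * a⁻¹ + (deriv f₁ x.1 + deriv f₂ x.1)/2 * b⁻¹| ≤
            1 * (8*(B*E)*u) := mul_le_mul hεabs hC3 (abs_nonneg _) one_pos.le
        _ = 8*(B*E)*u := one_mul _
    have hD2 : |ε * (-a⁻¹ - b⁻¹)| ≤ 8*(B*E)*u := by
      rw [abs_mul]
      calc |ε| * |-a⁻¹ - b⁻¹| ≤ 1 * (8*(B*E)*u) :=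
            mul_le_mul hεabs hC1 (abs_nonneg _) one_pos.le
        _ = 8*(B*E)*u := one_mul _
    have hia20 : (0:ℝ) < (a^2)⁻¹ := by positivity
    have hib20 : (0:ℝ) < (b^2)⁻¹ := by positivity
    have hu1 : |deriv f₂ x.1 * (a^2)⁻¹ - (deriv f₁ x.1 + deriv f₂ x.1)/2 * (b^2)⁻¹| ≤
        40*(B*E)^2*(γ+1)*u^2 := arU1 hp hq hia20 hib20 hia2 hib2 hB1 hE1 hu0 hγ
    have hu2 : |-(a^2)⁻¹ + (b^2)⁻¹| ≤ 40*(B*E)^2*(γ+1)*u^2 :=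
      arU2 hia20 hib20 hia2 hib2 hB1 hE1 hu0 hγ
    have hu3 : |deriv (deriv f₂) x.1 * a⁻¹ - (deriv f₂ x.1)^2 * (a^2)⁻¹ +
        (deriv (deriv f₁) x.1 + deriv (deriv f₂) x.1)/2 * b⁻¹ +
        ((deriv f₁ x.1 + deriv f₂ x.1)/2)^2 * (b^2)⁻¹| ≤ 40*(B*E)^2*(γ+1)*u^2 :=
      arU3 hc2 hcq hp hq hia0 hib0 hia20 hib20 hia hib hia2 hib2 hB1 hE1 hu0 hγ
    -- first-order bounds
    have hΦε : |Φ * ε| ≤ Φ := by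
      rw [abs_mul, abs_of_nonneg hΦ, abs_of_pos hε0]
      calc Φ * ε ≤ Φ * 1 := mul_le_mul_of_nonneg_left hε1.le hΦ
        _ = Φ := mul_one Φ
    have hbound1 : |gfun₁ μ f₁ f₂ ε Φ x| ≤ Φ * (M * (8*(B*E)*u)) := by
      rw [hg1, abs_mul]
      have h1 : |deriv μ (ph f₁ f₂ ε x) * (-a⁻¹ - b⁻¹)| ≤ M * (8*(B*E)*u) := by
        rw [abs_mul]
        exact mul_le_mul hmv hC1 (abs_nonneg _) (by rw [hMdef]; linarith)
      exact mul_le_mul hΦε h1 (abs_nonneg _) hΦ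
    have hbound2 : |gfun₂ μ f₁ f₂ ε Φ x| ≤ Φ * (M * (8*(B*E)*u)) := by
      rw [hg2, abs_neg, abs_mul]
      have h1 : |deriv μ (ph f₁ f₂ ε x) *
          (deriv f₂ x.1 * a⁻¹ + (deriv f₁ x.1 + deriv f₂ x.1)/2 * b⁻¹)| ≤ M * (8*(B*E)*u) := by
        rw [abs_mul]
        exact mul_le_mul hmv hC3 (abs_nonneg _) (by rw [hMdef]; linarith)
      exact mul_le_mul hΦε h1 (abs_nonneg _) hΦ
    constructor
    · calc Real.sqrt ((gfun₁ μ f₁ f₂ ε Φ x)^2 + (gfun₂ μ f₁ f₂ ε Φ x)^2) ≤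
            |gfun₁ μ f₁ f₂ ε Φ x| + |gfun₂ μ f₁ f₂ ε Φ x| := sqrt2_le _ _
        _ ≤ 2 * (Φ * (M * (8*(B*E)*u))) := by linarith
        _ = 16*M*B*E*Φ * u := by ring
        _ = 16*M*B*E*Φ / (f₂ x.1 - f₁ x.1) := by rw [hudef, div_eq_mul_inv]
    · -- second-order bounds
      set R : ℝ := Φ * (M * (8*(B*E)*u) * (8*(B*E)*u) + M * (40*(B*E)^2*(γ+1)*u^2)) with hRdef
      have hMnn : (0:ℝ) ≤ M := by rw [hMdef]; linarith
      have hSb : ∀ S : ℝ, |S| ≤ M * (8*(B*E)*u) * (8*(B*E)*u) + M * (40*(B*E)^2*(γ+1)*u^2) →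
          |Φ * ε * S| ≤ R := by
        intro S hS
        rw [hRdef, abs_mul]
        exact mul_le_mul hΦε hS (abs_nonneg _) hΦ
      have hb1 : |fderiv ℝ (gfun₁ μ f₁ f₂ ε Φ) x (1, 0)| ≤ R := by
        rw [ht1]
        exact hSb _ (bnd1 hmv' hD1 hC1 hmv hu1)
      have hb2 : |fderiv ℝ (gfun₁ μ f₁ f₂ ε Φ) x (0, 1)| ≤ R := by
        rw [ht2]
        exact hSb _ (bnd1 hmv' hD2 hC1 hmv hu2)
      have hb3 : |fderiv ℝ (gfun₂ μ f₁ f₂ ε Φ) x (1, 0)| ≤ R := by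
        rw [ht3, abs_neg]
        exact hSb _ (bnd1 hmv' hD1 hC3 hmv hu3)
      have hb4 : |fderiv ℝ (gfun₂ μ f₁ f₂ ε Φ) x (0, 1)| ≤ R := by
        rw [ht4, abs_neg]
        exact hSb _ (bnd1 hmv' hD2 hC3 hmv hu1)
      have hfin : 4 * R ≤ 512*M*(B*E)^2*(γ+1)*Φ*u^2 := by
        have hZ : (0:ℝ) ≤ M*(B*E)^2*Φ*u^2 := by positivity
        have h4R : 4 * R = 256*(M*(B*E)^2*Φ*u^2) + 160*((M*(B*E)^2*Φ*u^2)*(γ+1)) := by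
          rw [hRdef]; ring
        have := arFin hZ hγ
        have he : 512*((M*(B*E)^2*Φ*u^2)*(γ+1)) = 512*M*(B*E)^2*(γ+1)*Φ*u^2 := by ring
        linarith
      have hconv : 512*M*(B*E)^2*(γ+1)*Φ*u^2 = 512*M*(B*E)^2*(γ+1)*Φ / (f₂ x.1 - f₁ x.1)^2 := by
        rw [hudef, div_eq_mul_inv, inv_pow]
      calc Real.sqrt ((fderiv ℝ (gfun₁ μ f₁ f₂ ε Φ) x (1, 0))^2 +
            (fderiv ℝ (gfun₁ μ f₁ f₂ ε Φ) x (0, 1))^2 +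
            (fderiv ℝ (gfun₂ μ f₁ f₂ ε Φ) x (1, 0))^2 +
            (fderiv ℝ (gfun₂ μ f₁ f₂ ε Φ) x (0, 1))^2) ≤
            |fderiv ℝ (gfun₁ μ f₁ f₂ ε Φ) x (1, 0)| +
            |fderiv ℝ (gfun₁ μ f₁ f₂ ε Φ) x (0, 1)| +
            |fderiv ℝ (gfun₂ μ f₁ f₂ ε Φ) x (1, 0)| +
            |fderiv ℝ (gfun₂ μ f₁ f₂ ε Φ) x (0, 1)| := sqrt4_le _ _ _ _
        _ ≤ 4 * R := by linarith
        _ ≤ 512*M*(B*E)^2*(γ+1)*Φ*u^2 := hfin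
        _ = _ := hconv
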